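/- arXiv:1403.5286 — 2 statements merged into one kernel-verified Lean document; each statement's English description precedes it below -/
import Mathlib

section
/- Let θ ∈ (0, π/2), c = tan θ, and a ∈ (1/4, 1/2). For all sufficiently large n, for every point x = r·e^{i(-π/2+σ)} with αn ≤ r ≤ n and |σ| ≤ n^{-a} (where α ∈ (0,1) is fixed), the quadrangle Q_x (as defined via angle parameter θ) lies strictly above the horizontal line through x, i.e., every point of Q_x other than x has second coordinate strictly greater than that of x. -/
open Real EuclideanGeometry Complex

lemma key_pos_im (θ σ r : ℝ) (hθ1 : 0 < θ) (hθ2 : θ < π/2) (hσ : |σ| < π/2 - θ)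
    (hr : 0 < r) (x w : ℂ)
    (hx : x = (r : ℂ) * Complex.exp (Complex.I * (-(π/2) + σ)))
    (hw : w ≠ 0)
    (hang : InnerProductGeometry.angle w (-x) = θ) :
    0 < w.im := by
  have harg : -(π/2) + σ = -(π/2 - σ) := by ring
  have hxre : x.re = r * Real.sin σ := by
    simp [hx, Complex.exp_re, Complex.exp_im, Complex.mul_re, Complex.mul_im]
    left
    rw [harg, Real.cos_neg, Real.cos_pi_div_two_sub]
  have hxim : x.im = -(r * Real.cos σ) := by
    simp [hx, Complex.exp_re, Complex.exp_im, Complex.mul_re, Complex.mul_im]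
    rw [harg, Real.sin_neg, Real.sin_pi_div_two_sub]
    ring
  obtain ⟨v, hv⟩ : ∃ v : ℂ, v = -x := ⟨-x, rfl⟩
  rw [← hv] at hang
  have hvre : v.re = -(r * Real.sin σ) := by simp [hv, hxre]
  have hvim : v.im = r * Real.cos σ := by simp [hv, hxim]
  have hnv2 : ‖v‖ ^ 2 = v.re ^ 2 + v.im ^ 2 := by
    rw [Complex.sq_norm, Complex.normSq_apply]; ring
  have hσpi : |σ| < π / 2 := by linarith
  have hcσ : 0 < Real.cos σ := by
    rcases abs_lt.mp hσpi with ⟨h1, h2⟩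
    exact Real.cos_pos_of_mem_Ioo ⟨h1, h2⟩
  have hnvr : ‖v‖ = r := by
    have h2 : ‖v‖ ^ 2 = r ^ 2 := by
      rw [hnv2, hvre, hvim]
      have := Real.sin_sq_add_cos_sq σ
      nlinarith
    nlinarith [norm_nonneg v, sq_nonneg (‖v‖ - r)]
  have hv0 : v ≠ 0 := by
    intro h; rw [h] at hnvr; simp at hnvr; linarith
  have hnw : 0 < ‖w‖ := norm_pos_iff.mpr hw
  -- inner product
  have hwv := InnerProductGeometry.cos_angle_mul_norm_mul_norm w v
  rw [hang, hnvr] at hwv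
  have hinner : (inner ℝ w v : ℝ) = (starRingEnd ℂ w * v).re := by rw [Complex.inner, mul_comm]
  have h1 : ((starRingEnd ℂ) w * v).re = w.re * v.re + w.im * v.im := by
    simp [Complex.mul_re]
  rw [hinner, h1] at hwv
  have hA : w.re * v.re + w.im * v.im = ‖w‖ * r * Real.cos θ := by linarith
  obtain ⟨B, hB⟩ : ∃ B : ℝ, B = w.re * v.im - w.im * v.re := ⟨_, rfl⟩
  have hnw2 : ‖w‖ ^ 2 = w.re ^ 2 + w.im ^ 2 := by
    rw [Complex.sq_norm, Complex.normSq_apply]; ring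
  have hB2 : B ^ 2 = ‖w‖ ^ 2 * r ^ 2 * Real.sin θ ^ 2 := by
    have hlag : (w.re * v.re + w.im * v.im) ^ 2 + B ^ 2
        = (w.re ^ 2 + w.im ^ 2) * (v.re ^ 2 + v.im ^ 2) := by rw [hB]; ring
    have hs := Real.sin_sq_add_cos_sq θ
    have hv2r : v.re ^ 2 + v.im ^ 2 = r ^ 2 := by rw [← hnv2, hnvr]
    rw [hA, hv2r, ← hnw2] at hlag
    have hB2' : B ^ 2 = ‖w‖ ^ 2 * r ^ 2 - (‖w‖ * r * Real.cos θ) ^ 2 := by linarith [hlag]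
    rw [hB2']
    linear_combination (-(‖w‖ ^ 2 * r ^ 2)) * hs
  have hsθ : 0 < Real.sin θ := Real.sin_pos_of_pos_of_lt_pi hθ1 (by linarith [Real.pi_pos])
  have hBabs : |B| = ‖w‖ * r * Real.sin θ := by
    have h1 : |B| = Real.sqrt (B ^ 2) := (Real.sqrt_sq_eq_abs B).symm
    rw [h1, hB2]
    rw [show ‖w‖ ^ 2 * r ^ 2 * Real.sin θ ^ 2 = (‖w‖ * r * Real.sin θ) ^ 2 by ring]
    exact Real.sqrt_sq (by positivity)
  -- w.im * r^2 = A * v.im - B * v.re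
  have hwim : w.im * r ^ 2 = (w.re * v.re + w.im * v.im) * v.im - B * v.re := by
    have hv2r : v.re ^ 2 + v.im ^ 2 = r ^ 2 := by rw [← hnv2, hnvr]
    rw [hB, ← hv2r]; ring
  -- bound
  have hsina : |Real.sin σ| = Real.sin |σ| := by
    rcases le_or_gt 0 σ with h | h
    · rw [_root_.abs_of_nonneg h,
        _root_.abs_of_nonneg (Real.sin_nonneg_of_nonneg_of_le_pi h (by linarith [Real.pi_pos, hσpi, le_abs_self σ]))]
    · rw [_root_.abs_of_neg h, Real.sin_neg]
      exact _root_.abs_of_nonpos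
        (Real.sin_nonpos_of_nonpos_of_neg_pi_le h.le (by linarith [Real.pi_pos, hσpi, neg_abs_le σ]))
  have hcosadd : 0 < Real.cos (θ + |σ|) := by
    apply Real.cos_pos_of_mem_Ioo
    constructor
    · have := abs_nonneg σ; linarith
    · have := abs_nonneg σ; linarith [abs_lt.mp hσ]
  rw [Real.cos_add] at hcosadd
  rw [Real.cos_abs] at hcosadd
  have hkey : 0 < ‖w‖ * r ^ 2 * (Real.cos θ * Real.cos σ - Real.sin θ * Real.sin |σ|) :=
    mul_pos (mul_pos hnw (by positivity)) hcosadd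
  have hvreabs : |v.re| = r * |Real.sin σ| := by
    rw [hvre, abs_neg, abs_mul, _root_.abs_of_pos hr]
  have hBv : B * v.re ≤ ‖w‖ * r * Real.sin θ * (r * Real.sin |σ|) := by
    calc B * v.re ≤ |B * v.re| := le_abs_self _
    _ = |B| * |v.re| := abs_mul _ _
    _ = ‖w‖ * r * Real.sin θ * (r * Real.sin |σ|) := by rw [hBabs, hvreabs, hsina]
  have hpos : 0 < w.im * r ^ 2 := by
    rw [hwim, hA, hvim]
    linarith [hkey, hBv]
  have hr2 : 0 < r ^ 2 := by positivity
  rcases mul_pos_iff.mp hpos with ⟨h1, _⟩ | ⟨_, h2⟩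
  · exact h1
  · linarith

lemma xim_eq (σ r : ℝ) (x : ℂ)
    (hx : x = (r : ℂ) * Complex.exp (Complex.I * (-(π/2) + σ))) :
    x.im = -(r * Real.cos σ) := by
  have harg : -(π/2) + σ = -(π/2 - σ) := by ring
  simp [hx, Complex.exp_re, Complex.exp_im, Complex.mul_re, Complex.mul_im]
  rw [harg, Real.sin_neg, Real.sin_pi_div_two_sub]
  ring

/-- Let `θ ∈ (0, π/2)` and `a ∈ (1/4, 1/2)`, and fix `α ∈ (0,1)`. For all
sufficiently large `n`, for every point `x = r·exp(i(-π/2+σ))` with `αn ≤ r ≤ n` and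
`|σ| ≤ n^{-a}`, the quadrangle `Q_x` (the convex quadrangle with opposite vertices `O` and `x`,
right angles at the other two vertices `y, z`, angle `2θ` at `x`, with `Ox` bisecting the angles
at `O` and at `x`) lies strictly above the horizontal line through `x`: every point of `Q_x`
other than `x` has second coordinate strictly greater than that of `x`. -/
theorem stmt1 (θ : ℝ) (hθ : θ ∈ Set.Ioo 0 (π / 2)) (a : ℝ) (ha : a ∈ Set.Ioo (1/4 : ℝ) (1/2))
    (α : ℝ) (hα : α ∈ Set.Ioo (0 : ℝ) 1) :
    ∃ N : ℕ, ∀ n : ℕ, N ≤ n → ∀ r σ : ℝ,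
      α * n ≤ r → r ≤ n → |σ| ≤ (n : ℝ) ^ (-a) →
      ∀ x y z : ℂ, x = (r : ℂ) * Complex.exp (Complex.I * (-(π/2) + σ)) →
      x ≠ 0 → y ≠ 0 → z ≠ 0 → y ≠ x → z ≠ x → y ≠ z →
      ∠ (0 : ℂ) y x = π / 2 → ∠ (0 : ℂ) z x = π / 2 →
      ∠ y x z = 2 * θ → ∠ y x (0 : ℂ) = θ → ∠ z x (0 : ℂ) = θ →
      ∠ y (0 : ℂ) x = ∠ z (0 : ℂ) x →
      ∀ p ∈ convexHull ℝ ({0, y, x, z} : Set ℂ), p ≠ x → x.im < p.im := by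
  obtain ⟨hθ1, hθ2⟩ := hθ
  obtain ⟨ha1, ha2⟩ := ha
  obtain ⟨hα1, hα2⟩ := hα
  have htend : Filter.Tendsto (fun n : ℕ => (n : ℝ) ^ (-a)) Filter.atTop (nhds 0) :=
    (tendsto_rpow_neg_atTop (by linarith)).comp tendsto_natCast_atTop_atTop
  have hev : ∀ᶠ n : ℕ in Filter.atTop, (n : ℝ) ^ (-a) < π/2 - θ :=
    htend.eventually_lt_const (by linarith)
  obtain ⟨N, hN⟩ := Filter.eventually_atTop.mp (hev.and (Filter.eventually_ge_atTop 1))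
  refine ⟨N, fun n hn r σ hr1 hr2 hσ x y z hx hx0 hy0 hz0 hyx hzx hyz
    hOyx hOzx hyxz hyx0 hzx0 hbis p hp hpx => ?_⟩
  obtain ⟨hlt, hn1⟩ := hN n hn
  have hσ' : |σ| < π/2 - θ := lt_of_le_of_lt hσ hlt
  have hn1' : (1 : ℝ) ≤ (n : ℝ) := by exact_mod_cast hn1
  have hrpos : 0 < r := lt_of_lt_of_le (by nlinarith) hr1
  -- x is strictly below the horizontal axis
  have hximeq := xim_eq σ r x hx
  have hσpi : |σ| < π / 2 := by linarith
  have hcσ : 0 < Real.cos σ := by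
    rcases abs_lt.mp hσpi with ⟨h1, h2⟩
    exact Real.cos_pos_of_mem_Ioo ⟨h1, h2⟩
  have hx_im_neg : x.im < 0 := by rw [hximeq]; nlinarith
  -- y and z are strictly above x
  have hyim : x.im < y.im := by
    have hang : InnerProductGeometry.angle (y - x) (-x) = θ := by
      have : EuclideanGeometry.angle y x (0 : ℂ) = InnerProductGeometry.angle (y - x) (0 - x) := rfl
      rw [this, zero_sub] at hyx0
      exact hyx0
    have := key_pos_im θ σ r hθ1 hθ2 hσ' hrpos x (y - x) hx (sub_ne_zero.mpr hyx) hang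
    rw [Complex.sub_im] at this
    linarith
  have hzim : x.im < z.im := by
    have hang : InnerProductGeometry.angle (z - x) (-x) = θ := by
      have : EuclideanGeometry.angle z x (0 : ℂ) = InnerProductGeometry.angle (z - x) (0 - x) := rfl
      rw [this, zero_sub] at hzx0
      exact hzx0
    have := key_pos_im θ σ r hθ1 hθ2 hσ' hrpos x (z - x) hx (sub_ne_zero.mpr hzx) hang
    rw [Complex.sub_im] at this
    linarith
  -- convex hull argument
  set b : ℝ := min 0 (min y.im z.im) with hbdef
  have hxb : x.im < b := by
    rw [hbdef]
    simp only [lt_min_iff]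
    exact ⟨hx_im_neg, hyim, hzim⟩
  have hins : ({0, y, x, z} : Set ℂ) = insert x ({0, y, z} : Set ℂ) := by
    ext w; simp [Set.mem_insert_iff]; tauto
  rw [hins, convexHull_insert ⟨0, by simp [subset_convexHull]⟩] at hp
  rw [mem_convexJoin] at hp
  obtain ⟨x', hx', q, hq, hpseg⟩ := hp
  rw [Set.mem_singleton_iff] at hx'
  rw [hx'] at hpseg
  have hqb : b ≤ q.im := by
    have hsub : convexHull ℝ ({0, y, z} : Set ℂ) ⊆ {c : ℂ | b ≤ c.im} := by
      apply convexHull_min _ (convex_halfSpace_im_ge b)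
      intro w hw
      simp only [Set.mem_insert_iff, Set.mem_singleton_iff] at hw
      rcases hw with h | h | h <;> subst h <;> simp only [Set.mem_setOf_eq, hbdef, Complex.zero_im]
      · exact min_le_left _ _
      · exact le_trans (min_le_right _ _) (min_le_left _ _)
      · exact le_trans (min_le_right _ _) (min_le_right _ _)
    exact hsub hq
  rw [segment_eq_image] at hpseg
  obtain ⟨t, ht, hpt⟩ := hpseg
  obtain ⟨ht0, ht1⟩ := ht
  have hpim : p.im = (1 - t) * x.im + t * q.im := by
    rw [← hpt]
    simp [Complex.add_im, Complex.smul_im]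
  rcases eq_or_lt_of_le ht0 with h0 | h0
  · exfalso
    apply hpx
    rw [← hpt, ← h0]
    simp
  · rw [hpim]
    nlinarith
end

section
/- Let Ξ(r e^{i(-π/2+σ)}) = (nσ, n(n−r)/r). If x = r e^{i(-π/2+σ)} with r = n/(1 + s/n) (so Ξ(x) = (nσ, s)), then the Jacobian determinant of the transformation (y, s) ↦ Ξ^{-1}(y, s) ∈ ℝ² (expressed in Cartesian coordinates) equals (1 + s/n)^{-3} in absolute value. -/
open Real

/-- Let `Ξ⁻¹(y, s)` be the point of `ℝ²` with polar coordinates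
`r = n/(1 + s/n)` and argument `−π/2 + y/n`, i.e.
`Ξ⁻¹(y,s) = (r cos(−π/2 + y/n), r sin(−π/2 + y/n))`.  Then the Jacobian determinant of the
transformation `(y, s) ↦ Ξ⁻¹(y, s)` equals `(1 + s/n)^{-3}` in absolute value (for `s ≥ 0`). -/
theorem stmt3 (n : ℝ) (hn : 0 < n) (F : ℝ × ℝ → ℝ × ℝ)
    (hF : ∀ p : ℝ × ℝ, F p =
      ((n / (1 + p.2 / n)) * Real.cos (-(π/2) + p.1 / n),
       (n / (1 + p.2 / n)) * Real.sin (-(π/2) + p.1 / n))) :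
    ∀ y s : ℝ, 0 ≤ s →
      |LinearMap.det (fderiv ℝ F (y, s) : (ℝ × ℝ) →ₗ[ℝ] (ℝ × ℝ))| = (1 + s / n) ^ (-3 : ℝ) := by
  intro y s hs
  have hF' : F = fun p : ℝ × ℝ => ((n / (1 + p.2 / n)) * Real.cos (-(π/2) + p.1 / n),
       (n / (1 + p.2 / n)) * Real.sin (-(π/2) + p.1 / n)) := funext hF
  have hwpos : (0:ℝ) < 1 + s / n := by positivity
  have hw : (1:ℝ) + s / n ≠ 0 := ne_of_gt hwpos
  set θ : ℝ := -(π/2) + y / n with hθ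
  set w : ℝ := 1 + s / n with hwdef
  -- derivative of t ↦ n / (1 + t/n) at s
  have hden : HasDerivAt (fun t : ℝ => 1 + t / n) (1 / n) s := by
    simpa using ((hasDerivAt_id s).div_const n).const_add 1
  have hu : HasDerivAt (fun t : ℝ => n / (1 + t / n)) ((0 * w - n * (1 / n)) / w ^ 2) s :=
    (hasDerivAt_const s n).div hden hw
  -- derivative of t ↦ cos(-(π/2) + t/n) at y
  have hin : HasDerivAt (fun t : ℝ => -(π/2) + t / n) (1 / n) y := by
    simpa using ((hasDerivAt_id y).div_const n).const_add (-(π/2))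
  have hv : HasDerivAt (fun t : ℝ => Real.cos (-(π/2) + t / n)) (-Real.sin θ * (1 / n)) y :=
    hin.cos
  have hv' : HasDerivAt (fun t : ℝ => Real.sin (-(π/2) + t / n)) (Real.cos θ * (1 / n)) y :=
    hin.sin
  -- lift to fderiv on ℝ × ℝ
  have hU : HasFDerivAt (fun p : ℝ × ℝ => n / (1 + p.2 / n))
      (((0 * w - n * (1 / n)) / w ^ 2) • (ContinuousLinearMap.snd ℝ ℝ ℝ)) (y, s) :=
    by have := hu.comp_hasFDerivAt (f := Prod.snd) (y, s) (hasFDerivAt_snd (𝕜 := ℝ) (E := ℝ) (F := ℝ)); exact this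
  have hV : HasFDerivAt (fun p : ℝ × ℝ => Real.cos (-(π/2) + p.1 / n))
      ((-Real.sin θ * (1 / n)) • (ContinuousLinearMap.fst ℝ ℝ ℝ)) (y, s) :=
    by have := hv.comp_hasFDerivAt (f := Prod.fst) (y, s) (hasFDerivAt_fst (𝕜 := ℝ) (E := ℝ) (F := ℝ)); exact this
  have hV' : HasFDerivAt (fun p : ℝ × ℝ => Real.sin (-(π/2) + p.1 / n))
      ((Real.cos θ * (1 / n)) • (ContinuousLinearMap.fst ℝ ℝ ℝ)) (y, s) :=
    by have := hv'.comp_hasFDerivAt (f := Prod.fst) (y, s) (hasFDerivAt_fst (𝕜 := ℝ) (E := ℝ) (F := ℝ)); exact this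
  have h1 := hU.mul hV
  have h2 := hU.mul hV'
  have hL := HasFDerivAt.prodMk h1 h2
  rw [hF'] at *
  rw [show fderiv ℝ (fun p : ℝ × ℝ => ((n / (1 + p.2 / n)) * Real.cos (-(π/2) + p.1 / n),
       (n / (1 + p.2 / n)) * Real.sin (-(π/2) + p.1 / n))) (y, s) = _ from hL.fderiv]
  rw [← LinearMap.det_toMatrix (Module.Basis.finTwoProd ℝ), Matrix.det_fin_two]
  simp [LinearMap.toMatrix_apply]
  rw [← hθ, ← hwdef]
  have h := Real.sin_sq_add_cos_sq θ
  have hn' : n ≠ 0 := ne_of_gt hn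
  rw [abs_eq (by positivity)]
  left
  field_simp
  linear_combination h
end
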